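/- Let E > 0 and Λ > 0 be real numbers with E/(2π) ≤ Λ², and set c = E/(2π). Then the Lebesgue measure of the region D = {(p, q) ∈ ℝ² : p·q ≥ 0, |p| ≤ Λ, |q| ≤ Λ, p·q ≤ c} is 4c·log Λ − 2c·(log c − 1); equivalently, (1/2)·∫_D dp dq = (2E/2π)·log Λ − (E/2π)·(log(E/2π) − 1). -/

import Mathlib

open MeasureTheory Set intervalIntegral

theorem aux (c Λ : ℝ) (hc : 0 < c) (hΛ : 0 < Λ) (h : c ≤ Λ ^ 2) :
    MeasureTheory.volume {x : ℝ × ℝ | 0 ≤ x.1 * x.2 ∧ |x.1| ≤ Λ ∧ |x.2| ≤ Λ ∧ x.1 * x.2 ≤ c}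
      = ENNReal.ofReal (4 * c * Real.log Λ - 2 * c * (Real.log c - 1)) := by
  set S : Set (ℝ × ℝ) := {x | 0 ≤ x.1 * x.2 ∧ |x.1| ≤ Λ ∧ |x.2| ≤ Λ ∧ x.1 * x.2 ≤ c} with hSdef
  have hcΛ : c / Λ ≤ Λ := by rw [div_le_iff₀ hΛ]; nlinarith
  have hcΛpos : 0 < c / Λ := div_pos hc hΛ
  set f : ℝ → ℝ := fun p => min Λ (c / |p|) with hfdef
  have hfnonneg : ∀ p, 0 ≤ f p := fun p => le_min hΛ.le (by positivity)
  have hfleΛ : ∀ p, f p ≤ Λ := fun p => min_le_left _ _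
  have hfm : Measurable f := measurable_const.min (measurable_const.div measurable_abs)
  -- measurability of S
  have hS : MeasurableSet S := by
    have h1 : MeasurableSet {x : ℝ × ℝ | 0 ≤ x.1 * x.2} :=
      measurableSet_le measurable_const (measurable_fst.mul measurable_snd)
    have h2 : MeasurableSet {x : ℝ × ℝ | |x.1| ≤ Λ} :=
      measurableSet_le measurable_fst.abs measurable_const
    have h3 : MeasurableSet {x : ℝ × ℝ | |x.2| ≤ Λ} :=
      measurableSet_le measurable_snd.abs measurable_const
    have h4 : MeasurableSet {x : ℝ × ℝ | x.1 * x.2 ≤ c} :=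
      measurableSet_le (measurable_fst.mul measurable_snd) measurable_const
    have : S = {x : ℝ × ℝ | 0 ≤ x.1 * x.2} ∩ ({x | |x.1| ≤ Λ} ∩ ({x | |x.2| ≤ Λ} ∩ {x | x.1 * x.2 ≤ c})) := by
      ext x; simp [hSdef, mem_inter_iff, and_assoc]
    rw [this]; exact h1.inter (h2.inter (h3.inter h4))
  -- slices
  have slice_pos : ∀ p : ℝ, 0 < p → p ≤ Λ → Prod.mk p ⁻¹' S = Icc 0 (min Λ (c / p)) := by
    intro p hp hpΛ
    ext q
    simp only [hSdef, mem_preimage, mem_setOf_eq, mem_Icc, le_min_iff, abs_le]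
    constructor
    · rintro ⟨h1, _, h3, h4⟩
      exact ⟨nonneg_of_mul_nonneg_right h1 hp, h3.2, (le_div_iff₀' hp).2 h4⟩
    · rintro ⟨h1, h2, h3⟩
      exact ⟨mul_nonneg hp.le h1, ⟨by linarith, hpΛ⟩, ⟨by linarith, h2⟩, (le_div_iff₀' hp).1 h3⟩
  have slice_neg : ∀ p : ℝ, p < 0 → -Λ ≤ p → Prod.mk p ⁻¹' S = Icc (max (-Λ) (c / p)) 0 := by
    intro p hp hpΛ
    ext q
    simp only [hSdef, mem_preimage, mem_setOf_eq, mem_Icc, max_le_iff, abs_le]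
    constructor
    · rintro ⟨h1, _, h3, h4⟩
      refine ⟨⟨h3.1, ?_⟩, nonpos_of_mul_nonneg_right h1 hp⟩
      rw [div_le_iff_of_neg hp]; linarith [h4]
    · rintro ⟨⟨h1, h2⟩, h3⟩
      have h4 : p * q ≤ c := by
        have := (div_le_iff_of_neg hp).1 h2; linarith
      exact ⟨by nlinarith, ⟨hpΛ, by linarith⟩, ⟨h1, by linarith⟩, h4⟩
  have slice_empty : ∀ p : ℝ, Λ < |p| → Prod.mk p ⁻¹' S = ∅ := by
    intro p hp
    ext q
    simp only [hSdef, mem_preimage, mem_setOf_eq, mem_empty_iff_false, iff_false]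
    rintro ⟨_, h2, _, _⟩; linarith
  -- volume as lintegral
  have key : MeasureTheory.volume S = ∫⁻ p in Ioc (-Λ) Λ, ENNReal.ofReal (f p) := by
    rw [MeasureTheory.Measure.volume_eq_prod, Measure.prod_apply hS]
    rw [← MeasureTheory.lintegral_indicator measurableSet_Ioc]
    apply lintegral_congr_ae
    filter_upwards [compl_mem_ae_iff.2 (Real.volume_singleton (a := (0:ℝ))),
      compl_mem_ae_iff.2 (Real.volume_singleton (a := (-Λ:ℝ)))] with p hp hpΛ'
    simp only [mem_compl_iff, mem_singleton_iff] at hp hpΛ'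
    rcases lt_trichotomy p 0 with hneg | hzero | hpos
    · rcases le_or_gt (-Λ) p with hge | hlt
      · have hgt : -Λ < p := lt_of_le_of_ne hge (Ne.symm hpΛ')
        rw [slice_neg p hneg hge, Real.volume_Icc]
        rw [indicator_of_mem (by exact ⟨hgt, by linarith⟩)]
        congr 1
        simp only [hfdef]
        rw [abs_of_neg hneg, zero_sub, div_neg]
        rcases le_total (-Λ) (c/p) with h' | h'
        · rw [max_eq_right h', min_eq_right (by linarith)]
        · rw [max_eq_left h', min_eq_left (by linarith), neg_neg]
      · rw [slice_empty p (by rw [abs_of_neg hneg]; linarith), measure_empty,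
          indicator_of_notMem (by simp only [mem_Ioc, not_and_or]; left; linarith)]
    · exact absurd hzero hp
    · rcases le_or_gt p Λ with hle | hlt
      · rw [slice_pos p hpos hle, Real.volume_Icc]
        rw [indicator_of_mem (by exact ⟨by linarith, hle⟩)]
        congr 1
        simp only [hfdef]
        rw [abs_of_pos hpos, sub_zero]
      · rw [slice_empty p (by rw [abs_of_pos hpos]; linarith), measure_empty,
          indicator_of_notMem (by simp only [mem_Ioc, not_and_or]; right; linarith)]
  -- integrability
  have hfint : IntegrableOn f (Ioc (-Λ) Λ) volume := by
    refine Integrable.mono' (g := fun _ => Λ) ?_ (hfm.aestronglyMeasurable) ?_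
    · exact integrableOn_const (by rw [Real.volume_Ioc]; exact ENNReal.ofReal_ne_top)
    · filter_upwards with p
      rw [Real.norm_eq_abs, abs_of_nonneg (hfnonneg p)]; exact hfleΛ p
  have key2 : MeasureTheory.volume S = ENNReal.ofReal (∫ p in Ioc (-Λ) Λ, f p) := by
    rw [key, MeasureTheory.ofReal_integral_eq_lintegral_ofReal hfint
      (Filter.Eventually.of_forall hfnonneg)]
  -- compute the real integral
  have hIoc : ∫ p in Ioc (-Λ) Λ, f p = ∫ p in (-Λ)..Λ, f p := by
    rw [intervalIntegral.integral_of_le (by linarith)]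
  have hii : IntervalIntegrable f volume (-Λ) Λ := by
    rw [intervalIntegrable_iff_integrableOn_Ioc_of_le (by linarith)]; exact hfint
  have hiiAll : ∀ a b : ℝ, -Λ ≤ a → a ≤ b → b ≤ Λ → IntervalIntegrable f volume a b := by
    intro a b ha hab hb
    exact hii.mono_set (by rw [uIcc_of_le hab, uIcc_of_le (by linarith)]; exact Icc_subset_Icc ha hb)
  have hsplit : ∫ p in (-Λ)..Λ, f p
      = (∫ p in (-Λ)..(-(c/Λ)), f p) + (∫ p in (-(c/Λ))..(c/Λ), f p) + (∫ p in (c/Λ)..Λ, f p) := by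
    rw [← integral_add_adjacent_intervals (a := -Λ) (b := c/Λ) (c := Λ)
        (hiiAll _ _ le_rfl (by linarith) hcΛ) (hiiAll _ _ (by linarith) hcΛ le_rfl),
      ← integral_add_adjacent_intervals (a := -Λ) (b := -(c/Λ)) (c := c/Λ)
        (hiiAll _ _ le_rfl (by linarith) (by linarith)) (hiiAll _ _ (by linarith) (by linarith) hcΛ)]
  have logΛ2 : Real.log (c / Λ ^ 2) = Real.log c - 2 * Real.log Λ := by
    rw [Real.log_div hc.ne' (by positivity), Real.log_pow]; push_cast; ring
  have hP1 : ∫ p in (-Λ)..(-(c/Λ)), f p = c * (2 * Real.log Λ - Real.log c) := by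
    have heq : EqOn f (fun p => -c * p⁻¹) (uIcc (-Λ) (-(c/Λ))) := by
      intro p hp
      rw [uIcc_of_le (by linarith)] at hp
      obtain ⟨h1, h2⟩ := hp
      have hpneg : p < 0 := by linarith
      have hmin : c / |p| ≤ Λ := by
        rw [abs_of_neg hpneg, div_le_iff₀ (by linarith : (0:ℝ) < -p)]
        nlinarith [(div_le_iff₀ hΛ).1 (show c/Λ ≤ -p by linarith)]
      show min Λ (c / |p|) = -c * p⁻¹
      rw [min_eq_right hmin, abs_of_neg hpneg, div_neg, div_eq_mul_inv, ← neg_mul]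
    rw [intervalIntegral.integral_congr heq]
    have h0 : (0:ℝ) ∉ uIcc (-Λ) (-(c/Λ)) := by
      rw [uIcc_of_le (by linarith : -Λ ≤ -(c/Λ)), mem_Icc]
      push_neg
      intro _; linarith
    rw [intervalIntegral.integral_const_mul, integral_inv h0]
    have hq : (-(c/Λ)) / (-Λ) = c / Λ ^ 2 := by rw [neg_div_neg_eq, div_div, ← sq]
    rw [hq, logΛ2]; ring
  have hP3 : ∫ p in (c/Λ)..Λ, f p = c * (2 * Real.log Λ - Real.log c) := by
    have heq : EqOn f (fun p => c * p⁻¹) (uIcc (c/Λ) Λ) := by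
      intro p hp
      rw [uIcc_of_le hcΛ] at hp
      obtain ⟨h1, h2⟩ := hp
      have hppos : 0 < p := lt_of_lt_of_le hcΛpos h1
      have hmin : c / |p| ≤ Λ := by
        rw [abs_of_pos hppos, div_le_iff₀ hppos]
        nlinarith [(div_le_iff₀ hΛ).1 h1]
      show min Λ (c / |p|) = c * p⁻¹
      rw [min_eq_right hmin, abs_of_pos hppos, div_eq_mul_inv]
    rw [intervalIntegral.integral_congr heq]
    have h0 : (0:ℝ) ∉ uIcc (c/Λ) Λ := by
      rw [uIcc_of_le hcΛ, mem_Icc]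
      push_neg
      intro h'; linarith
    rw [intervalIntegral.integral_const_mul, integral_inv h0]
    have hq : Λ / (c/Λ) = Λ ^ 2 / c := by field_simp
    rw [hq, Real.log_div (by positivity) hc.ne', Real.log_pow]
    push_cast; ring
  have hP2 : ∫ p in (-(c/Λ))..(c/Λ), f p = 2 * c := by
    have heq : ∀ᵐ p ∂(volume : Measure ℝ), p ∈ Set.uIoc (-(c/Λ)) (c/Λ) → f p = Λ := by
      filter_upwards [compl_mem_ae_iff.2 (Real.volume_singleton (a := (0:ℝ)))] with p hp hmem
      simp only [mem_compl_iff, mem_singleton_iff] at hp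
      rw [uIoc_of_le (by linarith)] at hmem
      obtain ⟨h1, h2⟩ := hmem
      have habs : |p| ≤ c / Λ := abs_le.2 ⟨h1.le, h2⟩
      have habspos : 0 < |p| := abs_pos.2 hp
      have hge : Λ ≤ c / |p| := by
        rw [le_div_iff₀ habspos]
        nlinarith [(le_div_iff₀ hΛ).1 habs]
      show min Λ (c / |p|) = Λ
      exact min_eq_left hge
    rw [intervalIntegral.integral_congr_ae heq, intervalIntegral.integral_const]
    rw [smul_eq_mul]
    field_simp
    ring
  rw [key2, hIoc, hsplit, hP1, hP2, hP3]
  congr 1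
  ring

/-- Semiclassical phase space count: the Lebesgue area of
`D = {(p,q) : pq ≥ 0, |p| ≤ Λ, |q| ≤ Λ, pq ≤ E/2π}` equals
`4(E/2π) log Λ - 2(E/2π)(log(E/2π) - 1)`. -/
theorem stmt_10 (E Λ : ℝ) (hE : 0 < E) (hΛ : 0 < Λ) (h : E / (2 * Real.pi) ≤ Λ ^ 2) :
    (MeasureTheory.volume {x : ℝ × ℝ | 0 ≤ x.1 * x.2 ∧ |x.1| ≤ Λ ∧ |x.2| ≤ Λ ∧
        x.1 * x.2 ≤ E / (2 * Real.pi)}).toReal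
      = 4 * (E / (2 * Real.pi)) * Real.log Λ
        - 2 * (E / (2 * Real.pi)) * (Real.log (E / (2 * Real.pi)) - 1) := by
  set c := E / (2 * Real.pi) with hcdef
  have hc : 0 < c := div_pos hE (by positivity)
  rw [aux c Λ hc hΛ h, ENNReal.toReal_ofReal]
  have hlog : Real.log c ≤ 2 * Real.log Λ := by
    have := Real.log_le_log hc h
    rwa [Real.log_pow, Nat.cast_ofNat] at this
  nlinarith [hlog, hc]
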